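/- arXiv:0705.2799 — 2 statements merged into one kernel-verified Lean document; each statement's English description precedes it below -/
import Mathlib

section
/- Let O_K be a discrete valuation ring with uniformizer π and fraction field K. Let A be a finite flat O_K-algebra such that A ⊗_{O_K} K is isomorphic, as a K-algebra, to a finite product of copies of K. Let R be a smooth O_K-algebra together with a surjective O_K-algebra homomorphism R ↠ A with kernel I. Then there exists a positive integer r such that, writing R^{(r)} for the integral closure in R ⊗_{O_K} K of the subalgebra R[π^{−r}I] generated by R and the elements π^{−r}x for x ∈ I, the image of R^{(r)} under the induced homomorphism R ⊗_{O_K} K → A ⊗_{O_K} K is exactly the integral closure of A in A ⊗_{O_K} K. -/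
open TensorProduct Polynomial

set_option synthInstance.maxHeartbeats 1000000
set_option maxHeartbeats 1000000

/-- For a flat `O`-algebra `B`, an ideal `J ⊆ B` and an element `c` of the
fraction field `K` (typically `c = π^{-r}`), this is the subalgebra `B[c·J]`
of `B ⊗[O] K` generated by (the image of) `B` and the elements `c·x` for
`x ∈ J`. -/
noncomputable def Subalgebra.dilatation (O : Type) [CommRing O]
    (K : Type) [CommRing K] [Algebra O K]
    (B : Type) [CommRing B] [Algebra O B] (J : Ideal B) (c : K) :
    Subalgebra O (B ⊗[O] K) :=
  Algebra.adjoin O ((Set.range fun b : B => b ⊗ₜ[O] (1 : K)) ∪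
    ((fun x : B => x ⊗ₜ[O] c) '' (J : Set B)))

/-- The integral closure of a subalgebra `S ⊆ A`, viewed again as an
`O`-subalgebra of `A`. -/
noncomputable def Subalgebra.integralClosureIn (O : Type) [CommRing O]
    (A : Type) [CommRing A] [Algebra O A] (S : Subalgebra O A) :
    Subalgebra O A :=
  Subalgebra.restrictScalars O (integralClosure S A)

set_option linter.unusedSectionVars false
set_option linter.unnecessarySimpa false

section Helpers


lemma map_integralClosure_mem {O B C : Type*} [CommRing O] [CommRing B] [CommRing C]
    [Algebra O B] [Algebra O C] (g : B →ₐ[O] C) {S : Subalgebra O B} {T : Subalgebra O C}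
    (hST : ∀ x ∈ S, g x ∈ T) {y : B} (hy : y ∈ integralClosure S B) :
    g y ∈ integralClosure T C := by
  obtain ⟨p, pm, pe⟩ := hy
  refine ⟨p.map (AlgHom.codRestrict (g.comp S.val) T (fun x => hST x x.2)).toRingHom,
    pm.map _, ?_⟩
  rw [eval₂_map]
  have hcomp : (algebraMap T C).comp
      (AlgHom.codRestrict (g.comp S.val) T (fun x => hST x x.2)).toRingHom
      = (g : B →+* C).comp (algebraMap S B) := by
    ext d; rfl
  rw [hcomp]
  have h2 : eval₂ ((g : B →+* C).comp (algebraMap S B)) ((g : B →+* C) y) p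
      = (g : B →+* C) (eval₂ (algebraMap S B) y p) := (hom_eval₂ _ _ _ _).symm
  rw [show (g y : C) = (g : B →+* C) y from rfl, h2, pe, map_zero]

lemma bot_integral {O C : Type*} [CommRing O] [CommRing C] [Algebra O C] {x : C}
    (hx : x ∈ integralClosure (⊥ : Subalgebra O C) C) : IsIntegral O x := by
  haveI : Algebra.IsIntegral O (⊥ : Subalgebra O C) := by
    constructor
    intro d
    obtain ⟨o, ho⟩ := Algebra.mem_bot.mp d.2
    have hd : d = algebraMap O (⊥ : Subalgebra O C) o := by
      apply Subtype.ext; exact ho.symm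
    rw [hd]
    exact isIntegral_algebraMap
  exact isIntegral_trans (A := (⊥ : Subalgebra O C)) x hx

variable (O : Type) [CommRing O] [IsDomain O] [IsDiscreteValuationRing O]
    (K : Type) [Field K] [Algebra O K] [IsFractionRing O K]
    (A : Type) [CommRing A] [Algebra O A] [Module.Flat O A]

lemma inj_ATensor : Function.Injective (algebraMap A (A ⊗[O] K)) := by
  intro a b hab
  have hinj : Function.Injective (Algebra.linearMap O K) := IsFractionRing.injective O K
  have h := Module.Flat.lTensor_preserves_injective_linearMap (M := A)
    (Algebra.linearMap O K) hinj
  have h2 : (LinearMap.lTensor A (Algebra.linearMap O K)) (a ⊗ₜ[O] (1:O))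
      = (LinearMap.lTensor A (Algebra.linearMap O K)) (b ⊗ₜ[O] (1:O)) := by
    simp only [LinearMap.lTensor_tmul, Algebra.linearMap_apply, map_one]
    exact hab
  have h4 := congrArg (TensorProduct.rid O A) (h h2)
  simpa using h4

lemma rep_pow (π : O) (hπ : Irreducible π) (lam : K) :
    ∃ (o : O) (n : ℕ), lam = algebraMap O K o * ((algebraMap O K π)⁻¹ ^ n) := by
  obtain ⟨a, b, hb, hlam⟩ := IsFractionRing.div_surjective (A := O) lam
  rcases eq_or_ne b 0 with rfl | hb0
  · exact absurd hb (by simp [mem_nonZeroDivisors_iff_ne_zero])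
  obtain ⟨n, u, hu⟩ := IsDiscreteValuationRing.eq_unit_mul_pow_irreducible hb0 hπ
  refine ⟨a * ↑u⁻¹, n, ?_⟩
  have hπ0 : algebraMap O K π ≠ 0 := by
    simpa using (map_ne_zero_iff _ (IsFractionRing.injective O K)).mpr hπ.ne_zero
  have hπn0 : (algebraMap O K π) ^ n ≠ 0 := pow_ne_zero _ hπ0
  have hu0 : algebraMap O K (↑u : O) ≠ 0 := by
    simpa using (map_ne_zero_iff _ (IsFractionRing.injective O K)).mpr u.ne_zero
  have huu : algebraMap O K (↑u⁻¹ : O) * algebraMap O K (↑u : O) = 1 := by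
    rw [← map_mul, Units.inv_mul, map_one]
  rw [← hlam, hu, map_mul, map_pow, map_mul, inv_pow, div_eq_iff (mul_ne_zero hu0 hπn0)]
  have : algebraMap O K a * algebraMap O K (↑u⁻¹ : O) * ((algebraMap O K π ^ n)⁻¹) *
      (algebraMap O K (↑u : O) * algebraMap O K π ^ n)
      = algebraMap O K a * (algebraMap O K (↑u⁻¹ : O) * algebraMap O K (↑u : O)) *
        ((algebraMap O K π ^ n)⁻¹ * algebraMap O K π ^ n) := by ring
  rw [this, huu, inv_mul_cancel₀ hπn0, mul_one, mul_one]

lemma rep_tensor (π : O) (hπ : Irreducible π) (z : A ⊗[O] K) :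
    ∃ (a : A) (n : ℕ), z = a ⊗ₜ[O] ((algebraMap O K π)⁻¹ ^ n) := by
  have hπ0 : algebraMap O K π ≠ 0 := by
    simpa using (map_ne_zero_iff _ (IsFractionRing.injective O K)).mpr hπ.ne_zero
  induction z using TensorProduct.induction_on with
  | zero => exact ⟨0, 0, by simp⟩
  | tmul a lam =>
    obtain ⟨o, n, ho⟩ := rep_pow O K π hπ lam
    refine ⟨o • a, n, ?_⟩
    rw [ho, TensorProduct.smul_tmul, Algebra.smul_def]
  | add z₁ z₂ ih₁ ih₂ =>
    obtain ⟨a, n, rfl⟩ := ih₁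
    obtain ⟨b, k, rfl⟩ := ih₂
    refine ⟨π ^ k • a + π ^ n • b, n + k, ?_⟩
    rw [TensorProduct.add_tmul, TensorProduct.smul_tmul, TensorProduct.smul_tmul,
      Algebra.smul_def, Algebra.smul_def, map_pow, map_pow]
    congr 1 <;> congr 1
    · rw [pow_add, mul_left_comm, ← mul_pow, mul_inv_cancel₀ hπ0, one_pow, mul_one]
    · rw [pow_add, ← mul_assoc, ← mul_pow, mul_inv_cancel₀ hπ0, one_pow, one_mul]

end Helpers

section CharLemmas

variable {O : Type} [CommRing O]
    {K : Type} [Field K] [Algebra O K]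
    {A : Type} [CommRing A] [Algebra O A]
    {m : ℕ}

lemma decomp (φ : (A ⊗[O] K) ≃ₐ[O] (Fin m → K)) (z : A ⊗[O] K) (o : Fin m → O)
    (ho : ∀ i, algebraMap O K (o i) = φ z i) :
    z = ∑ i : Fin m, o i • φ.symm (Pi.single i 1) := by
  have h2 : ∀ i : Fin m, Pi.single i (φ z i) = o i • (Pi.single i (1 : K) : Fin m → K) := by
    intro i
    funext j
    rcases eq_or_ne j i with rfl | hji
    · simp [← ho j, Algebra.smul_def]
    · simp [Pi.single_apply, hji]
  conv_lhs => rw [← φ.symm_apply_apply z, ← Finset.univ_sum_single (φ z)]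
  rw [map_sum]
  congr 1
  funext i
  rw [h2 i, map_smul]

lemma idem_e (φ : (A ⊗[O] K) ≃ₐ[O] (Fin m → K)) (i : Fin m) :
    φ.symm (Pi.single i 1) * φ.symm (Pi.single i 1) = φ.symm (Pi.single i 1) := by
  rw [← map_mul]
  congr 1
  funext j
  rcases eq_or_ne j i with rfl | hji
  · simp
  · simp [Pi.single_apply, hji]

lemma e_integral (φ : (A ⊗[O] K) ≃ₐ[O] (Fin m → K)) (i : Fin m) :
    IsIntegral O (φ.symm (Pi.single i 1)) := by
  refine ⟨X ^ 2 - X, ?_, ?_⟩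
  · refine monic_X_pow_sub ?_
    calc degree (X : O[X]) ≤ 1 := degree_X_le
    _ < 2 := by norm_num
  · simp only [eval₂_sub, eval₂_pow, eval₂_X]
    rw [sq, idem_e, sub_self]

end CharLemmas

/-- Let `O` be a DVR with uniformizer `π` and fraction field
`K`.  Let `A` be a finite flat `O`-algebra such that `A ⊗[O] K` is
`K`-isomorphic to a finite product of copies of `K`.  Let `R` be a smooth
`O`-algebra with a surjection `s : R → A`, with kernel `I = ker s`.  Then
there is a positive integer `r` such that the image of
`R⁽ʳ⁾ = integral closure of R[π^{-r}I] in R ⊗[O] K` under the induced map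
`R ⊗[O] K → A ⊗[O] K` is exactly the integral closure of `A` in `A ⊗[O] K`. -/
theorem statement_1
    (O : Type) [CommRing O] [IsDomain O] [IsDiscreteValuationRing O]
    (π : O) (hπ : Irreducible π)
    (K : Type) [Field K] [Algebra O K] [IsFractionRing O K]
    (A : Type) [CommRing A] [Algebra O A] [Module.Finite O A] [Module.Flat O A]
    (m : ℕ) (hsplit : Nonempty ((K ⊗[O] A) ≃ₐ[K] (Fin m → K)))
    (R : Type) [CommRing R] [Algebra O R] [Algebra.Smooth O R]
    (s : R →ₐ[O] A) (hs : Function.Surjective s) :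
    ∃ r : ℕ, 0 < r ∧
      Subalgebra.map (Algebra.TensorProduct.map s (AlgHom.id O K))
          (Subalgebra.integralClosureIn O (R ⊗[O] K)
            (Subalgebra.dilatation O K R (RingHom.ker s) ((algebraMap O K π)⁻¹ ^ r)))
        = Subalgebra.restrictScalars O (integralClosure A (A ⊗[O] K)) := by
  classical
  obtain ⟨ψ⟩ := hsplit
  set φ : (A ⊗[O] K) ≃ₐ[O] (Fin m → K) :=
    (Algebra.TensorProduct.comm O A K).trans (ψ.restrictScalars O) with hφ
  have hπ0 : algebraMap O K π ≠ 0 := by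
    simpa using (map_ne_zero_iff _ (IsFractionRing.injective O K)).mpr hπ.ne_zero
  set e : Fin m → A ⊗[O] K := fun i => φ.symm (Pi.single i 1) with he
  -- representation of the idempotents
  have hrep : ∀ i : Fin m, ∃ (x : R) (n : ℕ),
      e i = (s x) ⊗ₜ[O] ((algebraMap O K π)⁻¹ ^ n) := by
    intro i
    obtain ⟨a, n, ha⟩ := rep_tensor O K A π hπ (e i)
    obtain ⟨x, rfl⟩ := hs a
    exact ⟨x, n, ha⟩
  choose x n hxn using hrep
  set r : ℕ := 2 * (Finset.univ.sup n) + 1 with hr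
  have hrn : ∀ i, 2 * n i ≤ r := by
    intro i
    have := Finset.le_sup (f := n) (Finset.mem_univ i)
    omega
  refine ⟨r, Nat.succ_pos _, ?_⟩
  set F := Algebra.TensorProduct.map s (AlgHom.id O K) with hF
  set D := Subalgebra.dilatation O K R (RingHom.ker s) ((algebraMap O K π)⁻¹ ^ r) with hD
  haveI : Algebra.IsIntegral O A := Algebra.IsIntegral.of_finite O A
  -- characterization part 1
  have hcoords : ∀ z : A ⊗[O] K, IsIntegral A z →
      ∀ i, ∃ o : O, algebraMap O K o = φ z i := by
    intro z hz i
    have hOz : IsIntegral O z := isIntegral_trans (A := A) z hz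
    have : IsIntegral O (φ z i) :=
      hOz.map ((Pi.evalAlgHom O (fun _ => K) i).comp φ.toAlgHom)
    exact IsIntegrallyClosed.isIntegral_iff.mp this
  -- characterization part 2
  have hchar2 : ∀ z : A ⊗[O] K, (∀ i, ∃ o : O, algebraMap O K o = φ z i) →
      IsIntegral A z := by
    intro z hz
    choose o ho using hz
    have hOz : IsIntegral O z := by
      rw [decomp φ z o ho]
      exact Subalgebra.sum_mem (integralClosure O (A ⊗[O] K))
        (fun i _ => Subalgebra.smul_mem _ (e_integral φ i) _)
    exact hOz.tower_top
  apply le_antisymm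
  · -- LHS ≤ RHS
    rintro z hz
    rw [Subalgebra.mem_map] at hz
    obtain ⟨y, hy, rfl⟩ := hz
    rw [Subalgebra.integralClosureIn, Subalgebra.mem_restrictScalars] at hy
    rw [Subalgebra.mem_restrictScalars]
    refine hchar2 (F y) (fun i => ?_)
    set g : (R ⊗[O] K) →ₐ[O] K :=
      (Pi.evalAlgHom O (fun _ => K) i).comp (φ.toAlgHom.comp F) with hg
    have hgen : ∀ v ∈ D, g v ∈ (⊥ : Subalgebra O K) := by
      have hle : D ≤ Subalgebra.comap g (⊥ : Subalgebra O K) := by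
        rw [hD, Subalgebra.dilatation]
        apply Algebra.adjoin_le
        rintro w (⟨b, rfl⟩ | ⟨xx, hxx, rfl⟩)
        · rw [SetLike.mem_coe, Subalgebra.mem_comap]
          have hval : g (b ⊗ₜ[O] (1 : K)) = φ ((s b) ⊗ₜ[O] (1 : K)) i := by
            simp [hg, hF, Algebra.TensorProduct.map_tmul]
          rw [hval]
          have hχ : IsIntegral O (φ ((s b) ⊗ₜ[O] (1 : K)) i) := by
            have hi : IsIntegral O (s b) := Algebra.IsIntegral.isIntegral (s b)
            have h2 : ((s b) ⊗ₜ[O] (1 : K)) = algebraMap A (A ⊗[O] K) (s b) := rfl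
            rw [h2]
            exact hi.map ((Pi.evalAlgHom O (fun _ => K) i).comp
              (φ.toAlgHom.comp (IsScalarTower.toAlgHom O A (A ⊗[O] K))))
          rw [Algebra.mem_bot]
          obtain ⟨o, ho⟩ := IsIntegrallyClosed.isIntegral_iff.mp hχ
          exact ⟨o, ho⟩
        · rw [SetLike.mem_coe, Subalgebra.mem_comap]
          have hker : s xx = 0 := by
            simpa [RingHom.mem_ker] using hxx
          have hval : g (xx ⊗ₜ[O] ((algebraMap O K π)⁻¹ ^ r)) = 0 := by
            simp [hg, hF, Algebra.TensorProduct.map_tmul, hker]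
          rw [hval]
          exact Subalgebra.zero_mem _
      intro v hv
      exact hle hv
    have h1 : g y ∈ integralClosure (⊥ : Subalgebra O K) K :=
      map_integralClosure_mem g hgen hy
    have h2 : IsIntegral O (g y) := bot_integral h1
    obtain ⟨o, ho⟩ := IsIntegrallyClosed.isIntegral_iff.mp h2
    exact ⟨o, ho⟩
  · -- RHS ≤ LHS
    intro z hz
    rw [Subalgebra.mem_restrictScalars] at hz
    have hoc := hcoords z hz
    choose o ho using hoc
    rw [show z = ∑ i : Fin m, o i • φ.symm (Pi.single i 1) from decomp φ z o ho]
    apply Subalgebra.sum_mem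
    intro i _
    apply Subalgebra.smul_mem
    -- e i is in the image
    set y : R ⊗[O] K := (x i) ⊗ₜ[O] ((algebraMap O K π)⁻¹ ^ (n i)) with hy
    have hFy : F y = e i := by
      rw [hy, hF]
      rw [Algebra.TensorProduct.map_tmul]
      rw [hxn i]
      rfl
    -- the element t
    have hidem : e i * e i = e i := idem_e φ i
    have hei : e i = (s (x i)) ⊗ₜ[O] ((algebraMap O K π)⁻¹ ^ (n i)) := hxn i
    -- w ∈ ker s
    set w : R := x i * x i - π ^ (n i) • x i with hw
    have hwker : w ∈ RingHom.ker s := by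
      rw [RingHom.mem_ker]
      apply inj_ATensor O K A
      rw [map_zero]
      have hsw : s w = s (x i) * s (x i) - π ^ (n i) • s (x i) := by
        rw [hw, map_sub, map_mul, map_smul]
      rw [hsw]
      have hmap : ∀ a : A, algebraMap A (A ⊗[O] K) a = a ⊗ₜ[O] (1 : K) := fun a => rfl
      rw [hmap]
      -- use the idempotent relation
      have hrel : (s (x i) * s (x i)) ⊗ₜ[O] ((algebraMap O K π)⁻¹ ^ (2 * n i))
          = (s (x i)) ⊗ₜ[O] ((algebraMap O K π)⁻¹ ^ (n i)) := by
        have := hidem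
        rw [hei] at this
        rw [Algebra.TensorProduct.tmul_mul_tmul] at this
        rw [← this]
        congr 1
        rw [← pow_add]
        congr 1
        omega
      have h2n := congrArg (fun v => (π ^ (2 * n i)) • v) hrel
      rw [← TensorProduct.tmul_smul, ← TensorProduct.tmul_smul] at h2n
      have hsm : ∀ (k : ℕ) (lam : K), (π ^ k) • lam = (algebraMap O K π) ^ k * lam := by
        intro k lam
        rw [Algebra.smul_def, map_pow]
      rw [hsm, hsm] at h2n
      have hl1 : (algebraMap O K π) ^ (2 * n i) * (algebraMap O K π)⁻¹ ^ (2 * n i)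
          = 1 := by
        rw [inv_pow, mul_inv_cancel₀ (pow_ne_zero _ hπ0)]
      have hl2 : (algebraMap O K π) ^ (2 * n i) * (algebraMap O K π)⁻¹ ^ (n i)
          = (algebraMap O K π) ^ (n i) := by
        rw [inv_pow]
        rw [show 2 * n i = n i + n i by omega, pow_add]
        rw [mul_assoc, mul_inv_cancel₀ (pow_ne_zero _ hπ0), mul_one]
      rw [hl1, hl2] at h2n
      -- h2n : (s x * s x) ⊗ 1 = s x ⊗ π^n
      rw [TensorProduct.sub_tmul]
      rw [h2n]
      have : (s (x i)) ⊗ₜ[O] ((algebraMap O K π) ^ (n i))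
          = (π ^ (n i) • s (x i)) ⊗ₜ[O] (1 : K) := by
        rw [TensorProduct.smul_tmul]
        congr 1
        rw [Algebra.smul_def, map_pow, mul_one]
      rw [this, sub_self]
    -- t ∈ D
    set t : R ⊗[O] K := y * y - y with ht
    have htD : t ∈ D := by
      have hyy : y * y = (x i * x i) ⊗ₜ[O] ((algebraMap O K π)⁻¹ ^ (2 * n i)) := by
        rw [hy, Algebra.TensorProduct.tmul_mul_tmul, ← pow_add]
        congr 2
        omega
      have hy2 : y = (π ^ (n i) • x i) ⊗ₜ[O] ((algebraMap O K π)⁻¹ ^ (2 * n i)) := by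
        rw [TensorProduct.smul_tmul, hy]
        congr 1
        rw [Algebra.smul_def, map_pow, inv_pow, inv_pow]
        rw [show 2 * n i = n i + n i by omega, pow_add, mul_inv, ← mul_assoc,
          mul_inv_cancel₀ (pow_ne_zero _ hπ0), one_mul]
      have htw : t = w ⊗ₜ[O] ((algebraMap O K π)⁻¹ ^ (2 * n i)) := by
        rw [ht, hyy]
        conv_lhs => rw [hy2]
        rw [← TensorProduct.sub_tmul, hw]
      rw [htw]
      have hgen : w ⊗ₜ[O] ((algebraMap O K π)⁻¹ ^ r) ∈ D := by
        rw [hD, Subalgebra.dilatation]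
        apply Algebra.subset_adjoin
        right
        exact ⟨w, hwker, rfl⟩
      have hsmul := Subalgebra.smul_mem D hgen (π ^ (r - 2 * n i))
      have hkey : ∀ kk ll : ℕ, kk ≤ ll →
          (π ^ (ll - kk)) • ((algebraMap O K π)⁻¹ ^ ll) = (algebraMap O K π)⁻¹ ^ kk := by
        intro kk ll hkl
        rw [Algebra.smul_def, map_pow, inv_pow, inv_pow]
        have hsplit2 : (algebraMap O K π) ^ ll
            = (algebraMap O K π) ^ (ll - kk) * (algebraMap O K π) ^ kk := by
          rw [← pow_add]
          congr 1
          omega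
        rw [hsplit2, mul_inv, ← mul_assoc, mul_inv_cancel₀ (pow_ne_zero _ hπ0), one_mul]
      have heq : (π ^ (r - 2 * n i)) • (w ⊗ₜ[O] ((algebraMap O K π)⁻¹ ^ r))
          = w ⊗ₜ[O] ((algebraMap O K π)⁻¹ ^ (2 * n i)) := by
        rw [← TensorProduct.tmul_smul]
        congr 1
        exact hkey (2 * n i) r (hrn i)
      rw [← heq]
      exact hsmul
    -- y is integral over D
    have hyint : y ∈ integralClosure D (R ⊗[O] K) := by
      refine ⟨X ^ 2 - (X + C (⟨t, htD⟩ : D)), ?_, ?_⟩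
      · refine monic_X_pow_sub ?_
        calc degree ((X : Polynomial D) + C (⟨t, htD⟩ : D)) ≤
            max (degree (X : Polynomial D)) (degree (C (⟨t, htD⟩ : D))) := degree_add_le _ _
        _ ≤ 1 := max_le degree_X_le (degree_C_le.trans (by norm_num))
        _ < 2 := by norm_num
      · simp only [eval₂_sub, eval₂_add, eval₂_pow, eval₂_X, eval₂_C]
        have : algebraMap D (R ⊗[O] K) (⟨t, htD⟩ : D) = t := rfl
        rw [this, ht, sq]
        ring
    rw [Subalgebra.mem_map]
    refine ⟨y, ?_, hFy⟩
    rw [Subalgebra.integralClosureIn, Subalgebra.mem_restrictScalars]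
    exact hyint
end

section
/- Let O_K be a discrete valuation ring with uniformizer π and fraction field K. For i = 1, 2 let B_i be a smooth O_K-algebra with an O_K-algebra retraction σ_i : B_i → O_K and kernel I_i = ker σ_i. Let B = B_1 ⊗_{O_K} B_2 with the retraction σ = σ_1 ⊗ σ_2 and I = ker σ (so I = I_1·B + I_2·B). Then for every positive integer r, the canonical homomorphism B_1[π^{−r}I_1] ⊗_{O_K} B_2[π^{−r}I_2] → B[π^{−r}I], induced by the inclusions of B_i[π^{−r}I_i] into B ⊗_{O_K} K, is an isomorphism of O_K-algebras. -/
open TensorProduct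

set_option synthInstance.maxHeartbeats 1000000
set_option maxHeartbeats 1000000

/-- Over a PID, torsion-free modules are flat. -/
theorem Statement11Aux.flat_of_noZeroSMulDivisors (R M : Type) [CommRing R] [IsDomain R]
    [IsPrincipalIdealRing R] [AddCommGroup M] [Module R M] [NoZeroSMulDivisors R M] :
    Module.Flat R M := by
  rw [Module.Flat.iff_rTensor_injective']
  intro I
  obtain ⟨a, rfl⟩ := (IsPrincipalIdealRing.principal I).principal
  by_cases ha : a = 0
  · subst ha
    rw [Submodule.span_zero_singleton]
    intro x y _
    exact Subsingleton.elim x y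
  · set e := LinearEquiv.toSpanNonzeroSingleton R R a ha with he
    have hcomp : ∀ x : R ⊗[R] M,
        LinearMap.rTensor M (Submodule.span R {a}).subtype
          (LinearMap.rTensor M (e : R →ₗ[R] _) x) = a • x := by
      intro x
      induction x with
      | zero => simp
      | tmul r m =>
          simp only [LinearMap.rTensor_tmul, Submodule.coe_subtype, LinearEquiv.coe_coe]
          have h1 : ((e r : R ∙ a) : R) = r * a := by
            rw [he, LinearEquiv.toSpanNonzeroSingleton_apply]; exact smul_eq_mul r a
          rw [h1, smul_tmul', smul_eq_mul, mul_comm]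
      | add x y hx hy => simp only [map_add, hx, hy, smul_add]
    have hsmul : Function.Injective (fun x : R ⊗[R] M => a • x) := by
      intro x y hxy
      apply (TensorProduct.lid R M).injective
      apply smul_right_injective M ha
      simpa only [map_smul] using congrArg (TensorProduct.lid R M) hxy
    intro x y hxy
    obtain ⟨x', rfl⟩ := (LinearEquiv.rTensor M e).surjective x
    obtain ⟨y', rfl⟩ := (LinearEquiv.rTensor M e).surjective y
    have hx' : ∀ z, (LinearEquiv.rTensor M e) z = LinearMap.rTensor M (e : R →ₗ[R] _) z :=
      fun z => rfl
    rw [hx', hx'] at hxy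
    have h2 : a • x' = a • y' := by rw [← hcomp, ← hcomp, hxy]
    rw [hsmul h2]

/-- `K ⊗[O] K ≃ K` when `K` is a localization of `O`. -/
noncomputable def Statement11Aux.eKK (O : Type) [CommRing O] (K : Type) [CommRing K]
    [Algebra O K] [IsLocalization (nonZeroDivisors O) K] : (K ⊗[O] K) ≃ₐ[O] K :=
  haveI := IsLocalization.tensorProduct_compatibleSMul (nonZeroDivisors O) K K K
  (Algebra.TensorProduct.lmulEquiv O K).restrictScalars O

/-- The canonical isomorphism `(B₁ ⊗ K) ⊗ (B₂ ⊗ K) ≃ (B₁ ⊗ B₂) ⊗ K`. -/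
noncomputable def Statement11Aux.Psi (O : Type) [CommRing O] (K : Type) [CommRing K]
    [Algebra O K] [IsLocalization (nonZeroDivisors O) K]
    (B₁ B₂ : Type) [CommRing B₁] [CommRing B₂] [Algebra O B₁] [Algebra O B₂] :
    ((B₁ ⊗[O] K) ⊗[O] (B₂ ⊗[O] K)) ≃ₐ[O] ((B₁ ⊗[O] B₂) ⊗[O] K) :=
  (Algebra.TensorProduct.tensorTensorTensorComm O O O O B₁ K B₂ K).trans
    (Algebra.TensorProduct.congr AlgEquiv.refl (Statement11Aux.eKK O K))

theorem Statement11Aux.Psi_tmul (O : Type) [CommRing O] (K : Type) [CommRing K]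
    [Algebra O K] [IsLocalization (nonZeroDivisors O) K]
    (B₁ B₂ : Type) [CommRing B₁] [CommRing B₂] [Algebra O B₁] [Algebra O B₂]
    (b₁ : B₁) (k₁ : K) (b₂ : B₂) (k₂ : K) :
    Statement11Aux.Psi O K B₁ B₂ ((b₁ ⊗ₜ[O] k₁) ⊗ₜ[O] (b₂ ⊗ₜ[O] k₂))
      = (b₁ ⊗ₜ[O] b₂) ⊗ₜ[O] (k₁ * k₂) := by
  have : Statement11Aux.eKK O K (k₁ ⊗ₜ[O] k₂) = k₁ * k₂ := rfl
  simp [Statement11Aux.Psi, Algebra.TensorProduct.congr, this]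

/-- Subalgebras of `B ⊗[O] K` are torsion-free over `O`. -/
theorem Statement11Aux.nzsd (O : Type) [CommRing O] [IsDomain O]
    (K : Type) [Field K] [Algebra O K] [IsFractionRing O K]
    (B : Type) [CommRing B] [Algebra O B]
    (S' : Subalgebra O (B ⊗[O] K)) : NoZeroSMulDivisors O S' := by
  constructor
  intro o s h
  by_cases ho : o = 0
  · exact Or.inl ho
  · right
    apply Subtype.ext
    have h' : o • (s : B ⊗[O] K) = 0 := congrArg Subtype.val h
    set e := Algebra.TensorProduct.comm O B K with he
    have h2 : o • (e (s : B ⊗[O] K)) = 0 := by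
      have h3 : o • (e (s : B ⊗[O] K)) = e (o • (s : B ⊗[O] K)) :=
        (map_smul e.toLinearEquiv o (s : B ⊗[O] K)).symm
      rw [h3, h', map_zero]
    rw [← algebraMap_smul K o] at h2
    rcases smul_eq_zero.mp h2 with h0 | h0
    · exact absurd (IsFractionRing.to_map_eq_zero_iff.mp h0) ho
    · have h3 : e (s : B ⊗[O] K) = e 0 := by rw [h0, map_zero]
      simpa using e.injective h3

/-- An algebraic identity in a tensor product of algebras. -/
theorem Statement11Aux.tmul_sub_smul_one (O : Type) [CommRing O]
    (B₁ B₂ : Type) [CommRing B₁] [CommRing B₂] [Algebra O B₁] [Algebra O B₂]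
    (s t : O) (a : B₁) (b : B₂) :
    a ⊗ₜ[O] b - (s * t) • (1 : B₁ ⊗[O] B₂) =
      (a - s • 1) ⊗ₜ[O] b + s • ((1 : B₁) ⊗ₜ[O] (b - t • 1)) := by
  rw [sub_tmul, tmul_sub, smul_sub, Algebra.TensorProduct.one_def]
  rw [tmul_smul, smul_smul, smul_tmul', smul_tmul']
  abel

set_option maxHeartbeats 8000000 in
set_option synthInstance.maxHeartbeats 2000000 in
/-- Let `O` be a DVR with uniformizer `π` and fraction field
`K`.  For `i = 1,2` let `Bᵢ` be a smooth `O`-algebra with a retraction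
`σᵢ : Bᵢ → O`, with kernel `Iᵢ`.  Let `B = B₁ ⊗[O] B₂` with retraction
`σ = σ₁ ⊗ σ₂` and `I = ker σ`.  Then for every positive integer `r` the
canonical homomorphism `B₁[π^{-r}I₁] ⊗[O] B₂[π^{-r}I₂] → B[π^{-r}I]`,
induced by the inclusions of `Bᵢ[π^{-r}Iᵢ]` into `B ⊗[O] K`, is an
isomorphism of `O`-algebras (i.e. it is injective with range `B[π^{-r}I]`). -/
theorem statement_11
    (O : Type) [CommRing O] [IsDomain O] [IsDiscreteValuationRing O]
    (π : O) (hπ : Irreducible π)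
    (K : Type) [Field K] [Algebra O K] [IsFractionRing O K]
    (B₁ B₂ : Type) [CommRing B₁] [CommRing B₂] [Algebra O B₁] [Algebra O B₂]
    [Algebra.Smooth O B₁] [Algebra.Smooth O B₂]
    (σ₁ : B₁ →ₐ[O] O) (σ₂ : B₂ →ₐ[O] O)
    (r : ℕ) (hr : 0 < r)
    -- `B₁[π^{-r}I₁]`, `B₂[π^{-r}I₂]` and `B[π^{-r}I]` :
    (S₁ : Subalgebra O (B₁ ⊗[O] K)) (S₂ : Subalgebra O (B₂ ⊗[O] K))
    (S : Subalgebra O ((B₁ ⊗[O] B₂) ⊗[O] K))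
    (hS₁ : S₁ = Subalgebra.dilatation O K B₁ (RingHom.ker σ₁)
      (((algebraMap O K π)⁻¹) ^ r))
    (hS₂ : S₂ = Subalgebra.dilatation O K B₂ (RingHom.ker σ₂)
      (((algebraMap O K π)⁻¹) ^ r))
    (hS : S = Subalgebra.dilatation O K (B₁ ⊗[O] B₂)
      (RingHom.ker (Algebra.TensorProduct.productMap σ₁ σ₂))
      (((algebraMap O K π)⁻¹) ^ r))
    -- the inclusions `Bᵢ ⊗ K → B ⊗ K` :
    (ι₁ : (B₁ ⊗[O] K) →ₐ[O] ((B₁ ⊗[O] B₂) ⊗[O] K))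
    (ι₂ : (B₂ ⊗[O] K) →ₐ[O] ((B₁ ⊗[O] B₂) ⊗[O] K))
    (hι₁ : ι₁ = Algebra.TensorProduct.map
      (Algebra.TensorProduct.includeLeft : B₁ →ₐ[O] B₁ ⊗[O] B₂) (AlgHom.id O K))
    (hι₂ : ι₂ = Algebra.TensorProduct.map
      (Algebra.TensorProduct.includeRight : B₂ →ₐ[O] B₁ ⊗[O] B₂) (AlgHom.id O K))
    -- the canonical homomorphism `S₁ ⊗[O] S₂ → B ⊗ K` :
    (Φ : (S₁ ⊗[O] S₂) →ₐ[O] ((B₁ ⊗[O] B₂) ⊗[O] K))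
    (hΦ : Φ = Algebra.TensorProduct.productMap (ι₁.comp S₁.val) (ι₂.comp S₂.val)) :
    Function.Injective Φ ∧ Φ.range = S := by
  set c : K := ((algebraMap O K π)⁻¹) ^ r with hc
  set σ : (B₁ ⊗[O] B₂) →ₐ[O] O := Algebra.TensorProduct.productMap σ₁ σ₂ with hσ
  -- values of ι₁, ι₂ on pure tensors
  have hι₁t : ∀ (b : B₁) (k : K), ι₁ (b ⊗ₜ[O] k) = (b ⊗ₜ[O] (1 : B₂)) ⊗ₜ[O] k := by
    intro b k; rw [hι₁, Algebra.TensorProduct.map_tmul]; rfl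
  have hι₂t : ∀ (b : B₂) (k : K), ι₂ (b ⊗ₜ[O] k) = ((1 : B₁) ⊗ₜ[O] b) ⊗ₜ[O] k := by
    intro b k; rw [hι₂, Algebra.TensorProduct.map_tmul]; rfl
  -- value of Φ on pure tensors
  have hΦt : ∀ (s : S₁) (t : S₂),
      Φ (s ⊗ₜ[O] t) = ι₁ (s : B₁ ⊗[O] K) * ι₂ (t : B₂ ⊗[O] K) := by
    intro s t
    rw [hΦ, Algebra.TensorProduct.productMap_apply_tmul]
    simp only [AlgHom.comp_apply, Subalgebra.coe_val]
  -- Ψ agrees with (x, y) ↦ ι₁ x * ι₂ y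
  have hPsi : ∀ (x : B₁ ⊗[O] K) (y : B₂ ⊗[O] K),
      Statement11Aux.Psi O K B₁ B₂ (x ⊗ₜ[O] y) = ι₁ x * ι₂ y := by
    intro x y
    induction x with
    | zero => simp
    | add u v hu hv => rw [add_tmul, map_add, hu, hv, map_add, add_mul]
    | tmul b₁ k₁ =>
      induction y with
      | zero => simp
      | add u v hu hv => rw [tmul_add, map_add, hu, hv, map_add, mul_add]
      | tmul b₂ k₂ =>
        rw [Statement11Aux.Psi_tmul, hι₁t, hι₂t, Algebra.TensorProduct.tmul_mul_tmul,
          Algebra.TensorProduct.tmul_mul_tmul, mul_one, one_mul]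
  -- Φ agrees with Ψ ∘ (val ⊗ val)
  have hPhi : ∀ z : S₁ ⊗[O] S₂, Φ z = Statement11Aux.Psi O K B₁ B₂
      (TensorProduct.map S₁.val.toLinearMap S₂.val.toLinearMap z) := by
    intro z
    induction z with
    | zero => simp
    | add u v hu hv => rw [map_add, hu, hv, map_add, map_add]
    | tmul s t =>
      rw [hΦt, TensorProduct.map_tmul, hPsi]
      rfl
  -- flatness instances
  have flatK : Module.Flat O K := IsLocalization.flat K (nonZeroDivisors O)
  have flatKB2 : Module.Flat O (K ⊗[O] B₂) := Module.Flat.trans O K (K ⊗[O] B₂)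
  have flatB2K : Module.Flat O (B₂ ⊗[O] K) :=
    Module.Flat.of_linearEquiv
      (Algebra.TensorProduct.comm O B₂ K).toLinearEquiv
  have nzs1 : NoZeroSMulDivisors O S₁ := Statement11Aux.nzsd O K B₁ S₁
  have flatS1 : Module.Flat O S₁ := Statement11Aux.flat_of_noZeroSMulDivisors O S₁
  -- injectivity of map val val
  have hLinj : Function.Injective
      (TensorProduct.map S₁.val.toLinearMap S₂.val.toLinearMap) := by
    rw [← LinearMap.rTensor_comp_lTensor, LinearMap.coe_comp]
    exact Function.Injective.comp
      (Module.Flat.rTensor_preserves_injective_linearMap S₁.val.toLinearMap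
        Subtype.val_injective)
      (Module.Flat.lTensor_preserves_injective_linearMap S₂.val.toLinearMap
        Subtype.val_injective)
  have hinj : Function.Injective Φ := by
    intro x y h
    rw [hPhi, hPhi] at h
    exact hLinj ((Statement11Aux.Psi O K B₁ B₂).injective h)
  refine ⟨hinj, le_antisymm ?_ ?_⟩
  · -- range ≤ S
    have hι₁S : ∀ s₁ : S₁, ι₁ (s₁ : B₁ ⊗[O] K) ∈ S := by
      intro s₁
      have hle : S₁.map ι₁ ≤ S := by
        rw [hS₁, Subalgebra.dilatation, AlgHom.map_adjoin, Algebra.adjoin_le_iff]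
        rintro _ ⟨g, hg, rfl⟩
        rcases hg with ⟨b, rfl⟩ | ⟨x, hx, rfl⟩
        · rw [hS]
          exact Algebra.subset_adjoin (Or.inl ⟨b ⊗ₜ[O] (1 : B₂), (hι₁t b 1).symm⟩)
        · rw [hS]
          refine Algebra.subset_adjoin (Or.inr ⟨x ⊗ₜ[O] (1 : B₂), ?_, (hι₁t x c).symm⟩)
          show x ⊗ₜ[O] (1 : B₂) ∈ RingHom.ker σ
          rw [RingHom.mem_ker]
          rw [hσ, Algebra.TensorProduct.productMap_apply_tmul, map_one, mul_one]
          exact hx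
      exact hle ⟨(s₁ : B₁ ⊗[O] K), s₁.2, rfl⟩
    have hι₂S : ∀ s₂ : S₂, ι₂ (s₂ : B₂ ⊗[O] K) ∈ S := by
      intro s₂
      have hle : S₂.map ι₂ ≤ S := by
        rw [hS₂, Subalgebra.dilatation, AlgHom.map_adjoin, Algebra.adjoin_le_iff]
        rintro _ ⟨g, hg, rfl⟩
        rcases hg with ⟨b, rfl⟩ | ⟨x, hx, rfl⟩
        · rw [hS]
          exact Algebra.subset_adjoin (Or.inl ⟨(1 : B₁) ⊗ₜ[O] b, (hι₂t b 1).symm⟩)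
        · rw [hS]
          refine Algebra.subset_adjoin (Or.inr ⟨(1 : B₁) ⊗ₜ[O] x, ?_, (hι₂t x c).symm⟩)
          show (1 : B₁) ⊗ₜ[O] x ∈ RingHom.ker σ
          rw [RingHom.mem_ker]
          rw [hσ, Algebra.TensorProduct.productMap_apply_tmul, map_one, one_mul]
          exact hx
      exact hle ⟨(s₂ : B₂ ⊗[O] K), s₂.2, rfl⟩
    have hmem : ∀ z : S₁ ⊗[O] S₂, Φ z ∈ S := by
      intro z
      induction z with
      | zero => rw [map_zero]; exact S.zero_mem
      | add u v hu hv => rw [map_add]; exact S.add_mem hu hv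
      | tmul s t =>
        rw [hΦt]
        exact S.mul_mem (hι₁S s) (hι₂S t)
    rintro _ ⟨z, rfl⟩
    exact hmem z
  · -- S ≤ range
    have hBmem : ∀ b : B₁ ⊗[O] B₂, b ⊗ₜ[O] (1 : K) ∈ Φ.range := by
      intro b
      induction b with
      | zero => rw [zero_tmul]; exact Φ.range.zero_mem
      | add u v hu hv => rw [add_tmul]; exact Φ.range.add_mem hu hv
      | tmul b₁ b₂ =>
        have h₁ : (b₁ ⊗ₜ[O] (1 : K)) ∈ S₁ := by
          rw [hS₁]; exact Algebra.subset_adjoin (Or.inl ⟨b₁, rfl⟩)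
        have h₂ : (b₂ ⊗ₜ[O] (1 : K)) ∈ S₂ := by
          rw [hS₂]; exact Algebra.subset_adjoin (Or.inl ⟨b₂, rfl⟩)
        have hw : Φ ((⟨_, h₁⟩ : S₁) ⊗ₜ[O] (⟨_, h₂⟩ : S₂)) = (b₁ ⊗ₜ[O] b₂) ⊗ₜ[O] (1 : K) := by
          rw [hΦt]
          show ι₁ (b₁ ⊗ₜ[O] (1 : K)) * ι₂ (b₂ ⊗ₜ[O] (1 : K)) = _
          rw [hι₁t, hι₂t]
          simp [Algebra.TensorProduct.tmul_mul_tmul]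
        exact ⟨_, hw⟩
    have key : ∀ x : B₁ ⊗[O] B₂,
          (x - (σ x) • (1 : B₁ ⊗[O] B₂)) ⊗ₜ[O] c ∈ Φ.range := by
        intro x
        induction x with
        | zero => simpa using Φ.range.zero_mem
        | add u v hu hv =>
          have heq : (u + v - (σ (u + v)) • (1 : B₁ ⊗[O] B₂)) =
              (u - σ u • (1 : B₁ ⊗[O] B₂)) + (v - σ v • (1 : B₁ ⊗[O] B₂)) := by
            rw [map_add, add_smul]; abel
          rw [heq, add_tmul]
          exact Φ.range.add_mem hu hv
        | tmul a b =>
          have hσab : σ (a ⊗ₜ[O] b) = σ₁ a * σ₂ b := by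
            rw [hσ, Algebra.TensorProduct.productMap_apply_tmul]
          rw [hσab, Statement11Aux.tmul_sub_smul_one, add_tmul, ← smul_tmul']
          have m1 : ((a - σ₁ a • 1) ⊗ₜ[O] b) ⊗ₜ[O] c ∈ Φ.range := by
            have ha' : (a - σ₁ a • 1) ⊗ₜ[O] c ∈ S₁ := by
              rw [hS₁]
              refine Algebra.subset_adjoin (Or.inr ⟨a - σ₁ a • 1, ?_, rfl⟩)
              show a - σ₁ a • 1 ∈ RingHom.ker σ₁
              rw [RingHom.mem_ker, map_sub, map_smul, map_one, smul_eq_mul, mul_one,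
                sub_self]
            have hb : b ⊗ₜ[O] (1 : K) ∈ S₂ := by
              rw [hS₂]; exact Algebra.subset_adjoin (Or.inl ⟨b, rfl⟩)
            have hw : Φ ((⟨_, ha'⟩ : S₁) ⊗ₜ[O] (⟨_, hb⟩ : S₂)) =
                ((a - σ₁ a • 1) ⊗ₜ[O] b) ⊗ₜ[O] c := by
              rw [hΦt]
              show ι₁ ((a - σ₁ a • 1) ⊗ₜ[O] c) * ι₂ (b ⊗ₜ[O] (1 : K)) = _
              rw [hι₁t, hι₂t]
              simp [Algebra.TensorProduct.tmul_mul_tmul]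
            exact ⟨_, hw⟩
          have m2 : ((1 : B₁) ⊗ₜ[O] (b - σ₂ b • 1)) ⊗ₜ[O] c ∈ Φ.range := by
            have hone : (1 : B₁) ⊗ₜ[O] (1 : K) ∈ S₁ := by
              rw [hS₁]; exact Algebra.subset_adjoin (Or.inl ⟨1, rfl⟩)
            have hb' : (b - σ₂ b • 1) ⊗ₜ[O] c ∈ S₂ := by
              rw [hS₂]
              refine Algebra.subset_adjoin (Or.inr ⟨b - σ₂ b • 1, ?_, rfl⟩)
              show b - σ₂ b • 1 ∈ RingHom.ker σ₂
              rw [RingHom.mem_ker, map_sub, map_smul, map_one, smul_eq_mul, mul_one,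
                sub_self]
            have hw : Φ ((⟨_, hone⟩ : S₁) ⊗ₜ[O] (⟨_, hb'⟩ : S₂)) =
                ((1 : B₁) ⊗ₜ[O] (b - σ₂ b • 1)) ⊗ₜ[O] c := by
              rw [hΦt]
              show ι₁ ((1 : B₁) ⊗ₜ[O] (1 : K)) * ι₂ ((b - σ₂ b • 1) ⊗ₜ[O] c) = _
              rw [hι₁t, hι₂t]
              simp [Algebra.TensorProduct.tmul_mul_tmul]
            exact ⟨_, hw⟩
          exact Φ.range.add_mem m1 (Φ.range.smul_mem m2 (σ₁ a))
    rw [hS, Subalgebra.dilatation, Algebra.adjoin_le_iff]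
    rintro _ (⟨b, rfl⟩ | ⟨x, hx, rfl⟩)
    · exact hBmem b
    · have hσx : σ x = 0 := by simpa [RingHom.mem_ker] using hx
      have hkey := key x
      rw [hσx, zero_smul, sub_zero] at hkey
      exact hkey
end
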